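/- For real x' ≥ 1 and integer n ≥ 2, the function p ↦ ((x'+p+1)ⁿ + (p+1)ⁿ)^{1/n} − ((x'+p)ⁿ + pⁿ)^{1/n} is strictly increasing in p for p ≥ 1 (real p). -/

import Mathlib

private lemma key_ident (m : ℕ) (a b : ℝ) :
    ((m:ℝ)+1)*((a^m + b^m) * (a^(m+2)+b^(m+2)) - (a^(m+1)+b^(m+1))^2)
      = ((m:ℝ)+1)*a^m*b^m*(a-b)^2 := by ring

/-- The step function is strictly increasing in the real parameter p ≥ 1. -/
theorem stmt_4 (x' : ℝ) (hx : 1 ≤ x') (n : ℕ) (hn : 2 ≤ n) :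
    StrictMonoOn (fun p : ℝ =>
      ((x' + p + 1) ^ n + (p + 1) ^ n) ^ ((1 : ℝ) / n)
        - ((x' + p) ^ n + p ^ n) ^ ((1 : ℝ) / n)) (Set.Ici (1 : ℝ)) := by
  obtain ⟨m, rfl⟩ : ∃ m, n = m + 2 := ⟨n - 2, by omega⟩
  have hx0 : (0:ℝ) < x' := lt_of_lt_of_le one_pos hx
  set E : ℝ := (1 : ℝ) / ((m + 2 : ℕ) : ℝ) with hE
  have hNcast : ((m + 2 : ℕ) : ℝ) = (m:ℝ) + 2 := by push_cast; ring
  have hNpos : (0:ℝ) < ((m + 2 : ℕ) : ℝ) := by rw [hNcast]; positivity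
  set g : ℝ → ℝ := fun t => ((x' + t) ^ (m+2) + t ^ (m+2)) ^ E with hgdef
  set h : ℝ → ℝ := fun t => (x' + t) ^ (m+2) + t ^ (m+2) with hhdef
  set u : ℝ → ℝ := fun t => (x' + t) ^ (m+1) + t ^ (m+1) with hudef
  set φ : ℝ → ℝ := fun t => u t * h t ^ (E - 1) with hφdef
  -- positivity of h
  have hhpos : ∀ p : ℝ, 0 < p → 0 < h p := by
    intro p hp
    have : 0 < x' + p := by linarith
    simp only [hhdef]
    positivity
  -- derivative of h
  have hh' : ∀ p : ℝ, HasDerivAt h (((m+2:ℕ):ℝ) * u p) p := by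
    intro p
    have h1 : HasDerivAt (fun t : ℝ => (x' + t) ^ (m+2))
        (((m+2:ℕ):ℝ) * (x' + p) ^ (m+1) * 1) p :=
      ((hasDerivAt_id p).const_add x').pow (m+2)
    have h2 : HasDerivAt (fun t : ℝ => t ^ (m+2)) (((m+2:ℕ):ℝ) * p ^ (m+1)) p :=
      hasDerivAt_pow (m+2) p
    have := h1.add h2
    refine this.congr_deriv ?_
    simp only [hudef, mul_one]
    ring
  -- derivative of u
  have hu' : ∀ p : ℝ, HasDerivAt u (((m+1:ℕ):ℝ) * ((x' + p) ^ m + p ^ m)) p := by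
    intro p
    have h1 : HasDerivAt (fun t : ℝ => (x' + t) ^ (m+1))
        (((m+1:ℕ):ℝ) * (x' + p) ^ m * 1) p :=
      ((hasDerivAt_id p).const_add x').pow (m+1)
    have h2 : HasDerivAt (fun t : ℝ => t ^ (m+1)) (((m+1:ℕ):ℝ) * p ^ m) p :=
      hasDerivAt_pow (m+1) p
    have := h1.add h2
    refine this.congr_deriv ?_
    ring
  -- derivative of g is φ
  have hg' : ∀ p : ℝ, 0 < p → HasDerivAt g (φ p) p := by
    intro p hp
    have hhp := hhpos p hp
    have := (hh' p).rpow_const (p := E) (Or.inl hhp.ne')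
    convert this using 1
    simp only [hφdef, hE]
    rw [hNcast]
    have : ((m:ℝ)+2) ≠ 0 := by positivity
    field_simp
  -- derivative of φ
  set G : ℝ → ℝ := fun p => ((m:ℝ)+1) * (x' + p) ^ m * p ^ m * x' ^ 2 * h p ^ (E - 1 - 1)
    with hGdef
  have hφ' : ∀ p : ℝ, 0 < p → HasDerivAt φ (G p) p := by
    intro p hp
    have hhp := hhpos p hp
    have hv : HasDerivAt (fun t => h t ^ (E - 1))
        (((m+2:ℕ):ℝ) * u p * (E - 1) * h p ^ (E - 1 - 1)) p :=
      (hh' p).rpow_const (Or.inl hhp.ne')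
    have hprod := (hu' p).mul hv
    refine hprod.congr_deriv (Eq.symm ?_)
    have hsplit : h p ^ (E - 1) = h p ^ (E - 1 - 1) * h p := by
      have h2 := Real.rpow_add hhp (E - 1 - 1) 1
      rw [Real.rpow_one] at h2
      rw [← h2]
      congr 1
      ring
    rw [hsplit]
    have hcoef : ((m+2:ℕ):ℝ) * (E - 1) = -((m:ℝ)+1) := by
      rw [hE, hNcast]
      have : ((m:ℝ)+2) ≠ 0 := by positivity
      field_simp
      ring
    have hbr : ((m+1:ℕ):ℝ) * ((x' + p) ^ m + p ^ m) * h p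
        + ((m+2:ℕ):ℝ) * (E - 1) * (u p)^2
        = ((m:ℝ)+1) * (x' + p) ^ m * p ^ m * x' ^ 2 := by
      rw [hcoef]
      have := key_ident m (x' + p) p
      simp only [hhdef, hudef]
      push_cast
      nlinarith [this]
    calc G p = (((m+1:ℕ):ℝ) * ((x' + p) ^ m + p ^ m) * h p
          + ((m+2:ℕ):ℝ) * (E - 1) * (u p)^2) * h p ^ (E - 1 - 1) := by
          rw [hbr]
      _ = ((m+1:ℕ):ℝ) * ((x' + p) ^ m + p ^ m) * (h p ^ (E - 1 - 1) * h p)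
          + u p * (((m+2:ℕ):ℝ) * u p * (E - 1) * h p ^ (E - 1 - 1)) := by ring
  -- G is positive
  have hGpos : ∀ p : ℝ, 0 < p → 0 < G p := by
    intro p hp
    have hhp := hhpos p hp
    have hxp : 0 < x' + p := by linarith
    have := Real.rpow_pos_of_pos hhp (E - 1 - 1)
    simp only [hGdef]
    positivity
  -- φ is strictly monotone on [1, ∞)
  have hφmono : StrictMonoOn φ (Set.Ici (1:ℝ)) := by
    apply strictMonoOn_of_deriv_pos (convex_Ici 1)
    · intro p hp
      have hp0 : (0:ℝ) < p := lt_of_lt_of_le one_pos hp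
      exact (hφ' p hp0).continuousAt.continuousWithinAt
    · intro p hp
      rw [interior_Ici] at hp
      have hp0 : (0:ℝ) < p := lt_trans one_pos hp
      rw [(hφ' p hp0).deriv]
      exact hGpos p hp0
  -- g is strictly convex on [1, ∞)
  have hconv : StrictConvexOn ℝ (Set.Ici (1:ℝ)) g := by
    apply StrictMonoOn.strictConvexOn_of_deriv (convex_Ici 1)
    · intro p hp
      have hp0 : (0:ℝ) < p := lt_of_lt_of_le one_pos hp
      exact (hg' p hp0).continuousAt.continuousWithinAt
    · rw [interior_Ici]
      intro a ha b hb hab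
      have ha0 : (0:ℝ) < a := lt_trans one_pos ha
      have hb0 : (0:ℝ) < b := lt_trans one_pos hb
      rw [(hg' a ha0).deriv, (hg' b hb0).deriv]
      exact hφmono (Set.mem_Ici.mpr (le_of_lt ha)) (Set.mem_Ici.mpr (le_of_lt hb)) hab
  -- conclude
  intro p hp q hq hpq
  simp only [Set.mem_Ici] at hp hq
  have hfp : ∀ t : ℝ, ((x' + t + 1) ^ (m+2) + (t+1) ^ (m+2)) ^ ((1:ℝ)/((m+2:ℕ):ℝ))
      = g (t+1) := by
    intro t
    simp only [hgdef]
    congr 2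
    ring
  have hp1 : p + 1 ∈ Set.Ici (1:ℝ) := by simp; linarith
  have hq1 : q + 1 ∈ Set.Ici (1:ℝ) := by simp; linarith
  have hpI : p ∈ Set.Ici (1:ℝ) := by simpa using hp
  have hqI : q ∈ Set.Ici (1:ℝ) := by simpa using hq
  have A := hconv.secant_strict_mono_aux1 (x := p) (y := p+1) (z := q+1) hpI hq1
    (by linarith) (by linarith)
  have B := hconv.secant_strict_mono_aux1 (x := p) (y := q) (z := q+1) hpI hq1
    hpq (by linarith)
  have hd : (0:ℝ) < q + 1 - p := by linarith
  have hsum : (q + 1 - p) * (g (p+1) + g q) < (q + 1 - p) * (g p + g (q+1)) := by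
    nlinarith [A, B]
  have hfin : g (p+1) + g q < g p + g (q+1) :=
    (mul_lt_mul_iff_right₀ hd).mp hsum
  show ((x' + p + 1) ^ (m+2) + (p+1) ^ (m+2)) ^ ((1:ℝ)/((m+2:ℕ):ℝ))
      - ((x' + p) ^ (m+2) + p ^ (m+2)) ^ ((1:ℝ)/((m+2:ℕ):ℝ))
    < ((x' + q + 1) ^ (m+2) + (q+1) ^ (m+2)) ^ ((1:ℝ)/((m+2:ℕ):ℝ))
      - ((x' + q) ^ (m+2) + q ^ (m+2)) ^ ((1:ℝ)/((m+2:ℕ):ℝ))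
  rw [hfp p, hfp q]
  have hgp : ((x' + p) ^ (m+2) + p ^ (m+2)) ^ ((1:ℝ)/((m+2:ℕ):ℝ)) = g p := rfl
  have hgq : ((x' + q) ^ (m+2) + q ^ (m+2)) ^ ((1:ℝ)/((m+2:ℕ):ℝ)) = g q := rfl
  rw [hgp, hgq]
  linarith
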